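/- Let N ∈ ℕ, α > 0 and x_1,…,x_N ∈ ℝ, and define Ψ : ℝ^N → ℝ by Ψ(t) = (Σ_{j=1}^N x_j e^{−α t_j}) / (Σ_{j=1}^N e^{−α t_j}). Then for all t, t̂ ∈ ℝ^N, |Ψ(t) − Ψ(t̂)| ≤ α · ‖t − t̂‖_∞ · diam(x), where ‖t − t̂‖_∞ = max_{j=1:N} |t_j − t̂_j| and diam(x) = max_{j=1:N} x_j − min_{j=1:N} x_j. (Consequently, the componentwise distance between the consensus point computed with exact objective values and the one computed with noisy values is bounded by α times the maximum evaluation error times the diameter of the particle components.) -/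

import Mathlib

noncomputable section

/-- The diameter of a vector `x ∈ ℝ^N`: `max_j x_j - min_j x_j`. -/
def vdiam {N : ℕ} (x : Fin N → ℝ) : ℝ := (⨆ j, x j) - (⨅ j, x j)

/-- The weighted softmin average `Ψ(t) = (Σ_j x_j e^{-α t_j}) / (Σ_j e^{-α t_j})`. -/
def Psi {N : ℕ} (α : ℝ) (x : Fin N → ℝ) (t : Fin N → ℝ) : ℝ :=
  (∑ j, x j * Real.exp (-α * t j)) / (∑ j, Real.exp (-α * t j))

/-- For all `t, t̂ ∈ ℝ^N`, `|Ψ(t) - Ψ(t̂)| ≤ α ‖t - t̂‖_∞ diam(x)`. -/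
theorem stmt10 {N : ℕ} (hN : 1 ≤ N) (α : ℝ) (hα : 0 < α)
    (x : Fin N → ℝ) (t t' : Fin N → ℝ) :
    |Psi α x t - Psi α x t'| ≤ α * (⨆ j, |t j - t' j|) * vdiam x := by
  have hNe : Nonempty (Fin N) := ⟨⟨0, hN⟩⟩
  set δ : ℝ := ⨆ j, |t j - t' j| with hδ
  have hdle : ∀ j, |t j - t' j| ≤ δ := fun j =>
    le_ciSup (f := fun j => |t j - t' j|) (Set.Finite.bddAbove (Set.finite_range _)) j
  have hδ0 : 0 ≤ δ := le_trans (abs_nonneg _) (hdle (Classical.arbitrary _))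
  have hxle : ∀ i j, |x i - x j| ≤ vdiam x := by
    intro i j
    rw [abs_sub_le_iff]
    have h1 := le_ciSup (Set.Finite.bddAbove (Set.finite_range x)) i
    have h2 := ciInf_le (Set.Finite.bddBelow (Set.finite_range x)) j
    have h3 := le_ciSup (Set.Finite.bddAbove (Set.finite_range x)) j
    have h4 := ciInf_le (Set.Finite.bddBelow (Set.finite_range x)) i
    unfold vdiam
    constructor <;> linarith
  have hvd0 : 0 ≤ vdiam x := le_trans (abs_nonneg _)
    (hxle (Classical.arbitrary _) (Classical.arbitrary _))
  set d : Fin N → ℝ := fun j => t j - t' j with hdd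
  set e : ℝ → Fin N → ℝ := fun s j => Real.exp (-α * (t' j + s * d j)) with he
  set F : ℝ → ℝ := fun s => ∑ j, x j * e s j with hF
  set G : ℝ → ℝ := fun s => ∑ j, e s j with hG
  set F' : ℝ → ℝ := fun s => ∑ j, x j * (e s j * (-α * d j)) with hF'
  set G' : ℝ → ℝ := fun s => ∑ j, e s j * (-α * d j) with hG'
  have hGpos : ∀ s, 0 < G s := fun s =>
    Finset.sum_pos (fun j _ => Real.exp_pos _) Finset.univ_nonempty
  have hinner : ∀ (s : ℝ) (j : Fin N), HasDerivAt (fun u => e u j) (e s j * (-α * d j)) s := by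
    intro s j
    have h1 : HasDerivAt (fun u : ℝ => -α * (t' j + u * d j)) (-α * d j) s := by
      have := (((hasDerivAt_id s).mul_const (d j)).const_add (t' j)).const_mul (-α)
      simpa using this
    simpa [he] using h1.exp
  have hFd : ∀ s, HasDerivAt F (F' s) s := fun s =>
    HasDerivAt.fun_sum (fun j _ => (hinner s j).const_mul (x j))
  have hGd : ∀ s, HasDerivAt G (G' s) s := fun s =>
    HasDerivAt.fun_sum (fun j _ => hinner s j)
  have hder : ∀ s : ℝ, HasDerivAt (fun u => F u / G u)
      ((F' s * G s - F s * G' s) / (G s) ^ 2) s := fun s =>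
    (hFd s).div (hGd s) (ne_of_gt (hGpos s))
  have hbound : ∀ s : ℝ, |(F' s * G s - F s * G' s) / (G s) ^ 2| ≤ α * δ * vdiam x := by
    intro s
    have hG2 : (0:ℝ) < (G s) ^ 2 := pow_pos (hGpos s) 2
    rw [abs_div, abs_of_pos hG2, div_le_iff₀ hG2]
    have key : F' s * G s - F s * G' s
        = ∑ i, ∑ j, (-α * d i) * (x i - x j) * (e s i * e s j) := by
      have h1 : F' s * G s = ∑ i, ∑ j, (-α * d i) * x i * (e s i * e s j) := by
        rw [hF', hG, Finset.sum_mul_sum]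
        exact Finset.sum_congr rfl fun i _ => Finset.sum_congr rfl fun j _ => by ring
      have h2 : F s * G' s = ∑ i, ∑ j, (-α * d i) * x j * (e s i * e s j) := by
        rw [hF, hG', Finset.sum_mul_sum, Finset.sum_comm]
        exact Finset.sum_congr rfl fun i _ => Finset.sum_congr rfl fun j _ => by ring
      rw [h1, h2, ← Finset.sum_sub_distrib]
      refine Finset.sum_congr rfl fun i _ => ?_
      rw [← Finset.sum_sub_distrib]
      exact Finset.sum_congr rfl fun j _ => by ring
    have hGsq : (G s) ^ 2 = ∑ i, ∑ j, e s i * e s j := by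
      rw [hG, sq, Finset.sum_mul_sum]
    rw [key, hGsq, Finset.mul_sum]
    calc |∑ i, ∑ j, (-α * d i) * (x i - x j) * (e s i * e s j)|
        ≤ ∑ i, |∑ j, (-α * d i) * (x i - x j) * (e s i * e s j)| :=
          Finset.abs_sum_le_sum_abs _ _
      _ ≤ ∑ i, ∑ j, |(-α * d i) * (x i - x j) * (e s i * e s j)| :=
          Finset.sum_le_sum fun i _ => Finset.abs_sum_le_sum_abs _ _
      _ ≤ ∑ i, α * δ * vdiam x * ∑ j, e s i * e s j := by
          refine Finset.sum_le_sum fun i _ => ?_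
          rw [Finset.mul_sum]
          refine Finset.sum_le_sum fun j _ => ?_
          rw [abs_mul, abs_mul]
          have he0 : 0 < e s i * e s j := mul_pos (Real.exp_pos _) (Real.exp_pos _)
          rw [abs_of_pos he0]
          have h1 : |(-α * d i)| ≤ α * δ := by
            rw [abs_mul, abs_neg, abs_of_pos hα]
            exact mul_le_mul_of_nonneg_left (hdle i) (le_of_lt hα)
          have h2 : |x i - x j| ≤ vdiam x := hxle i j
          calc |(-α * d i)| * |x i - x j| * (e s i * e s j)
              ≤ (α * δ) * vdiam x * (e s i * e s j) := by
                apply mul_le_mul_of_nonneg_right _ (le_of_lt he0)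
                exact mul_le_mul h1 h2 (abs_nonneg _) (mul_nonneg hα.le hδ0)
            _ = α * δ * vdiam x * (e s i * e s j) := by ring
  have hmvt := Convex.norm_image_sub_le_of_norm_hasDerivWithin_le
    (f := fun u => F u / G u)
    (f' := fun s => (F' s * G s - F s * G' s) / (G s) ^ 2)
    (fun s _ => (hder s).hasDerivWithinAt)
    (fun s _ => hbound s) convex_univ (Set.mem_univ (0:ℝ)) (Set.mem_univ (1:ℝ))
  have ht1 : Psi α x t = F 1 / G 1 := by
    have h1 : ∀ j, t' j + 1 * d j = t j := fun j => by simp [hdd]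
    simp only [Psi, hF, hG, he, h1]
  have ht0 : Psi α x t' = F 0 / G 0 := by
    have h1 : ∀ j, t' j + 0 * d j = t' j := fun j => by simp
    simp only [Psi, hF, hG, he, h1]
  rw [ht1, ht0]
  simpa using hmvt
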